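/- Let θ > 0, let (θ_i)_{i≥1} be a non-negative real sequence with θ_* := sup_i θ_i < ∞ and θ*' := max(θ, θ_*), and for m ∈ ℕ set δ(m,θ) := sup_{j≥0} | (1/m)·∑_{i=1}^m θ_{jm+i} − θ |. Let T be a ℤ₊-valued random variable, let g : ℤ₊ → ℝ be bounded with sup norm ‖g‖, and let 0 ≤ l < n and m ≥ 1. Then |∑_{i=l+1}^n (θ_i − θ)·E[g(T+i)]| ≤ ‖g‖·( 2θ*'m + n·δ(m,θ) + (1/4)·θ_*·m·n·d_TV(L(T), L(T+1)) ). -/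

import Mathlib

open MeasureTheory ProbabilityTheory Finset

/-- Total variation distance between two measures. -/
noncomputable def dTV {α : Type*} [MeasurableSpace α] (μ ν : Measure α) : ℝ :=
  ⨆ s : {s : Set α // MeasurableSet s}, |(μ s.1).toReal - (ν s.1).toReal|


-- L1: sum of min(k, m-k) over k in range (m+1) is ≤ m^2/4 (times 4)
lemma L1 : ∀ m : ℕ, 4 * ∑ k ∈ range (m+1), min k (m - k) ≤ m^2 := by
  intro m
  induction m using Nat.strong_induction_on with
  | _ m ih =>
    match m with
    | 0 => simp
    | 1 => simp [Finset.sum_range_succ]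
    | (m+2) =>
      have h := ih m (by omega)
      have e1 : ∑ k ∈ range (m+3), min k (m+2-k)
          = ∑ k ∈ range (m+1), min (k+1) (m+1-k) := by
        rw [Finset.sum_range_succ' (fun k => min k (m+2-k))]
        simp [Finset.sum_range_succ]
      have e2 : ∑ k ∈ range (m+1), min (k+1) (m+1-k)
          = ∑ k ∈ range (m+1), (min k (m-k) + 1) := by
        apply Finset.sum_congr rfl
        intro k hk
        simp only [Finset.mem_range] at hk
        omega
      rw [e1, e2, Finset.sum_add_distrib]
      simp only [Finset.sum_const, Finset.card_range, smul_eq_mul, mul_one]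
      ring_nf
      ring_nf at h
      omega

-- L2
lemma L2 (s t : ℝ) (hs : 0 ≤ s) (ht : 0 ≤ t) (m : ℕ) :
    ∑ k ∈ range (m+1), min (s*k) (t*((m:ℝ)-k)) ≤ (s+t)*m^2/8 := by
  set f : ℕ → ℝ := fun k => min (s*k) (t*((m:ℝ)-k)) with hf
  have hrefl : ∑ k ∈ range (m+1), f (m - k) = ∑ k ∈ range (m+1), f k := by
    have := Finset.sum_range_reflect f (m+1)
    simpa using this
  have hpt : ∀ k ∈ range (m+1), f k + f (m-k) ≤ (s+t) * (min k (m-k) : ℕ) := by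
    intro k hk
    simp only [Finset.mem_range] at hk
    have hkm : k ≤ m := by omega
    have hc : ((m - k : ℕ) : ℝ) = (m : ℝ) - k := by
      push_cast [hkm]; ring
    have hc2 : ((m - (m - k) : ℕ) : ℝ) = (k : ℝ) := by
      have : m - (m-k) = k := by omega
      rw [this]
    by_cases h2 : k ≤ m - k
    · have : ((min k (m-k) : ℕ) : ℝ) = (k : ℝ) := by
        rw [min_eq_left h2]
      rw [this]
      have b1 : f k ≤ s * k := min_le_left _ _
      have b2 : f (m-k) ≤ t * k := by
        have := min_le_right (s*((m-k:ℕ):ℝ)) (t*((m:ℝ)-((m-k:ℕ):ℝ)))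
        simpa [hf, hc, hc2] using this
      linarith
    · have hmin : ((min k (m-k) : ℕ) : ℝ) = ((m-k : ℕ) : ℝ) := by
        rw [min_eq_right (by omega)]
      rw [hmin, hc]
      have b1 : f k ≤ t * ((m:ℝ) - k) := min_le_right _ _
      have b2 : f (m-k) ≤ s * ((m:ℝ) - k) := by
        have := min_le_left (s*((m-k:ℕ):ℝ)) (t*((m:ℝ)-((m-k:ℕ):ℝ)))
        simpa [hf, hc] using this
      linarith
  have hL1 := L1 m
  have hL1' : (∑ k ∈ range (m+1), ((min k (m-k) : ℕ) : ℝ)) ≤ (m:ℝ)^2/4 := by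
    have h4 : ((4 * ∑ k ∈ range (m+1), min k (m-k) : ℕ) : ℝ) ≤ ((m^2 : ℕ) : ℝ) :=
      Nat.cast_le.mpr hL1
    push_cast at h4
    rw [← Nat.cast_sum]
    push_cast
    linarith
  have key : 2 * ∑ k ∈ range (m+1), f k ≤ (s+t) * ((m:ℝ)^2/4) := by
    calc 2 * ∑ k ∈ range (m+1), f k
        = ∑ k ∈ range (m+1), f k + ∑ k ∈ range (m+1), f (m-k) := by rw [hrefl]; ring
      _ = ∑ k ∈ range (m+1), (f k + f (m-k)) := by rw [Finset.sum_add_distrib]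
      _ ≤ ∑ k ∈ range (m+1), (s+t) * ((min k (m-k) : ℕ) : ℝ) := Finset.sum_le_sum hpt
      _ = (s+t) * ∑ k ∈ range (m+1), ((min k (m-k) : ℕ) : ℝ) := by rw [Finset.mul_sum]
      _ ≤ (s+t) * ((m:ℝ)^2/4) := by
          apply mul_le_mul_of_nonneg_left hL1' (by linarith)
  linarith

-- chain bound
lemma chainUp (s : ℝ) (m : ℕ) (e : ℕ → ℝ) (h : ∀ k < m, e (k+1) - e k ≤ s)
    (a b : ℕ) (hab : a ≤ b) (hbm : b ≤ m) : e b - e a ≤ s * ((b:ℝ) - a) := by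
  induction b, hab using Nat.le_induction with
  | base => simp
  | succ b hab ihb =>
    have h1 : e (b+1) - e b ≤ s := h b (by omega)
    have h2 := ihb (by omega)
    have h3 : s * (((b+1:ℕ):ℝ) - a) = s * ((b:ℝ) - a) + s := by push_cast; ring
    rw [h3]; linarith

lemma pathSum (s t : ℝ) (hs : 0 ≤ s) (ht : 0 ≤ t) :
    ∀ m : ℕ, ∀ e : ℕ → ℝ, e 0 = 0 → e m = 0 →
    (∀ k < m, e (k+1) - e k ≤ s) → (∀ k < m, e k - e (k+1) ≤ t) →
    ∑ k ∈ range (m+1), |e k| ≤ (s+t) * m^2 / 8 := by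
  intro m
  induction m using Nat.strong_induction_on with
  | _ m ih =>
  intro e h0 hmm hup hdn
  by_cases hm2 : m < 2
  · interval_cases m
    · simp [h0]
    · rw [Finset.sum_range_succ, Finset.sum_range_one, h0, hmm]
      simp
      positivity
  push_neg at hm2
  -- pointwise chain bounds
  have chainDn : ∀ a b : ℕ, a ≤ b → b ≤ m → e a - e b ≤ t * ((b:ℝ) - a) := by
    intro a b hab hbm
    have h2 : -e b - -e a ≤ t * ((b:ℝ) - a) :=
      chainUp t m (fun j => - e j)
        (fun j hj => by show -e (j+1) - -e j ≤ t; have := hdn j hj; linarith) a b hab hbm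
    linarith
  have hub : ∀ k, k ≤ m → e k ≤ s * k := by
    intro k hk
    have := chainUp s m e hup 0 k (by omega) hk
    rw [h0] at this; push_cast at this; linarith
  have hub2 : ∀ k, k ≤ m → e k ≤ t * ((m:ℝ) - k) := by
    intro k hk
    have := chainDn k m hk (le_refl m)
    rw [hmm] at this; linarith
  have hlb : ∀ k, k ≤ m → - e k ≤ t * k := by
    intro k hk
    have := chainDn 0 k (by omega) hk
    rw [h0] at this; push_cast at this; linarith
  have hlb2 : ∀ k, k ≤ m → - e k ≤ s * ((m:ℝ) - k) := by
    intro k hk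
    have := chainUp s m e hup k m hk (le_refl m)
    rw [hmm] at this; linarith
  by_cases hposc : ∀ k, k ≤ m → 0 ≤ e k
  · calc ∑ k ∈ range (m+1), |e k|
        ≤ ∑ k ∈ range (m+1), min (s*k) (t*((m:ℝ)-k)) := by
          apply Finset.sum_le_sum
          intro k hk
          simp only [Finset.mem_range] at hk
          rw [abs_of_nonneg (hposc k (by omega))]
          exact le_min (hub k (by omega)) (hub2 k (by omega))
      _ ≤ (s+t)*m^2/8 := L2 s t hs ht m
  by_cases hnegc : ∀ k, k ≤ m → e k ≤ 0
  · calc ∑ k ∈ range (m+1), |e k|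
        ≤ ∑ k ∈ range (m+1), min (t*k) (s*((m:ℝ)-k)) := by
          apply Finset.sum_le_sum
          intro k hk
          simp only [Finset.mem_range] at hk
          rw [abs_of_nonpos (hnegc k (by omega))]
          exact le_min (hlb k (by omega)) (hlb2 k (by omega))
      _ ≤ (t+s)*m^2/8 := L2 t s ht hs m
      _ = (s+t)*m^2/8 := by ring
  -- mixed case
  push_neg at hposc hnegc
  obtain ⟨i, him, hi⟩ := hposc
  obtain ⟨j, hjm, hj⟩ := hnegc
  obtain ⟨p, hpmem, hpmax⟩ := Finset.exists_max_image (range (m+1)) e ⟨0, by simp⟩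
  obtain ⟨q, hqmem, hqmin⟩ := Finset.exists_min_image (range (m+1)) e ⟨0, by simp⟩
  simp only [Finset.mem_range] at hpmem hqmem
  have hpM : 0 < e p := lt_of_lt_of_le hj (hpmax j (by simp only [Finset.mem_range]; omega))
  have hqN : e q < 0 := lt_of_le_of_lt (hqmin i (by simp only [Finset.mem_range]; omega)) hi
  have hp0 : p ≠ 0 := by intro h; rw [h, h0] at hpM; linarith
  have hpm : p ≠ m := by intro h; rw [h, hmm] at hpM; linarith
  have hq0 : q ≠ 0 := by intro h; rw [h, h0] at hqN; linarith
  have hqm : q ≠ m := by intro h; rw [h, hmm] at hqN; linarith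
  -- key bound (s+t)(e p - e q) ≤ s*t*m
  have key : (s+t) * (e p - e q) ≤ s * t * m := by
    rcases lt_trichotomy p q with h | h | h
    · have c1 := chainUp s m e hup 0 p (by omega) (by omega : p ≤ m)
      have c2 : e p - e q ≤ t * ((q:ℝ) - p) := chainDn p q (by omega) (by omega)
      have c3 := chainUp s m e hup q m (by omega) (le_refl m)
      rw [h0] at c1; rw [hmm] at c3; push_cast at c1
      have d1 : t * (e p) ≤ t * (s * p) := by
        apply mul_le_mul_of_nonneg_left _ ht; linarith
      have d2 : s * (e p - e q) ≤ s * (t * ((q:ℝ) - p)) := mul_le_mul_of_nonneg_left c2 hs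
      have d3 : t * (- e q) ≤ t * (s * ((m:ℝ) - q)) := by
        apply mul_le_mul_of_nonneg_left _ ht; linarith
      nlinarith
    · rw [h] at hpM; linarith
    · have c1 := chainDn 0 q (by omega) (by omega : q ≤ m)
      have c2 : e p - e q ≤ s * ((p:ℝ) - q) := chainUp s m e hup q p (by omega) (by omega)
      have c3 : e p - e m ≤ t * ((m:ℝ) - p) := chainDn p m (by omega) (le_refl m)
      rw [h0] at c1; rw [hmm] at c3; push_cast at c1
      have d1 : s * (- e q) ≤ s * (t * q) := by
        apply mul_le_mul_of_nonneg_left _ hs; linarith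
      have d2 : t * (e p - e q) ≤ t * (s * ((p:ℝ) - q)) := mul_le_mul_of_nonneg_left c2 ht
      have d3 : s * (e p) ≤ s * (t * ((m:ℝ) - p)) := by
        apply mul_le_mul_of_nonneg_left _ hs; linarith
      nlinarith
  have hst : 0 < s + t := by
    rcases lt_or_ge 0 (s+t) with h | h
    · exact h
    · exfalso
      have hs0 : s = 0 := by linarith
      have := hub p (by omega)
      rw [hs0] at this; simp at this; linarith
  have hMN : e p - e q ≤ (s+t) * m / 4 := by
    have h5 : s*t ≤ (s+t)^2/4 := by nlinarith [sq_nonneg (s-t)]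
    have h6 : s*t*(m:ℝ) ≤ (s+t)^2/4*(m:ℝ) := mul_le_mul_of_nonneg_right h5 (Nat.cast_nonneg m)
    have h4 : (s+t)*(e p - e q) ≤ (s+t)*((s+t)*(m:ℝ)/4) := by
      calc (s+t)*(e p - e q) ≤ s*t*(m:ℝ) := key
        _ ≤ (s+t)^2/4*(m:ℝ) := h6
        _ = (s+t)*((s+t)*(m:ℝ)/4) := by ring
    exact le_of_mul_le_mul_left h4 hst
  -- choose merge point
  set r : ℕ := if e p ≤ - e q then p else q with hr
  have hrkey : |e r| ≤ (s+t) * m / 8 := by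
    by_cases hc : e p ≤ - e q
    · rw [hr]; simp only [if_pos hc]
      rw [abs_of_nonneg (le_of_lt hpM)]
      linarith
    · rw [hr]; simp only [if_neg hc]
      rw [abs_of_nonpos (le_of_lt hqN)]
      push_neg at hc
      linarith
  have hrext : (∀ k, k ≤ m → e k ≤ e r) ∨ (∀ k, k ≤ m → e r ≤ e k) := by
    by_cases hc : e p ≤ - e q
    · left; intro k hk; rw [hr]; simp only [if_pos hc]
      exact hpmax k (by simp only [Finset.mem_range]; omega)
    · right; intro k hk; rw [hr]; simp only [if_neg hc]
      exact hqmin k (by simp only [Finset.mem_range]; omega)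
  have hr0 : 1 ≤ r := by
    rw [hr]; split <;> omega
  have hrm : r ≤ m - 1 := by
    rw [hr]; split <;> omega
  -- merged increments
  have hmerge_up : e (r+1) - e (r-1) ≤ s := by
    rcases hrext with hmax | hmin
    · have h1 : e r - e (r-1) ≤ s := by
        have := hup (r-1) (by omega)
        have hr1 : r - 1 + 1 = r := by omega
        rw [hr1] at this; exact this
      have h2 : e (r+1) ≤ e r := hmax (r+1) (by omega)
      linarith
    · have h1 : e (r+1) - e r ≤ s := hup r (by omega)
      have h2 : e r ≤ e (r-1) := hmin (r-1) (by omega)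
      linarith
  have hmerge_dn : e (r-1) - e (r+1) ≤ t := by
    rcases hrext with hmax | hmin
    · have h1 : e r - e (r+1) ≤ t := hdn r (by omega)
      have h2 : e (r-1) ≤ e r := hmax (r-1) (by omega)
      linarith
    · have h1 : e (r-1) - e r ≤ t := by
        have := hdn (r-1) (by omega)
        have hr1 : r - 1 + 1 = r := by omega
        rw [hr1] at this; exact this
      have h2 : e r ≤ e (r+1) := hmin (r+1) (by omega)
      linarith
  -- merged path
  set e' : ℕ → ℝ := fun k => if k < r then e k else e (k+1) with he'
  have he'0 : e' 0 = 0 := by rw [he']; simp only [if_pos (by omega : 0 < r)]; exact h0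
  have he'm : e' (m-1) = 0 := by
    rw [he']
    simp only [if_neg (by omega : ¬ (m-1 < r))]
    have : m - 1 + 1 = m := by omega
    rw [this]; exact hmm
  have he'up : ∀ k < m - 1, e' (k+1) - e' k ≤ s := by
    intro k hk
    rw [he']
    by_cases h1 : k + 1 < r
    · simp only [if_pos h1, if_pos (by omega : k < r)]
      exact hup k (by omega)
    · by_cases h2 : k + 1 = r
      · simp only [if_neg h1, if_pos (by omega : k < r)]
        have : k + 1 + 1 = r + 1 := by omega
        rw [this, (by omega : k = r - 1)]
        exact hmerge_up
      · simp only [if_neg h1, if_neg (by omega : ¬ (k < r))]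
        exact hup (k+1) (by omega)
  have he'dn : ∀ k < m - 1, e' k - e' (k+1) ≤ t := by
    intro k hk
    rw [he']
    by_cases h1 : k + 1 < r
    · simp only [if_pos h1, if_pos (by omega : k < r)]
      exact hdn k (by omega)
    · by_cases h2 : k + 1 = r
      · simp only [if_neg h1, if_pos (by omega : k < r)]
        have : k + 1 + 1 = r + 1 := by omega
        rw [this, (by omega : k = r - 1)]
        exact hmerge_dn
      · simp only [if_neg h1, if_neg (by omega : ¬ (k < r))]
        exact hdn (k+1) (by omega)
  have IH := ih (m-1) (by omega) e' he'0 he'm he'up he'dn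
  -- sum identity
  have hsplit : ∑ k ∈ range (m+1), |e k|
      = ∑ k ∈ range m, |e' k| + |e r| := by
    have hr1 : ∑ k ∈ range m, |e' k|
        = ∑ k ∈ Finset.Ico 0 r, |e' k| + ∑ k ∈ Finset.Ico r m, |e' k| := by
      rw [Finset.range_eq_Ico, ← Finset.sum_Ico_consecutive _ (by omega : 0 ≤ r) (by omega : r ≤ m)]
    have hA : ∑ k ∈ Finset.Ico 0 r, |e' k| = ∑ k ∈ Finset.Ico 0 r, |e k| := by
      apply Finset.sum_congr rfl
      intro k hk
      simp only [Finset.mem_Ico] at hk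
      rw [he']
      simp only [if_pos hk.2]
    have hB : ∑ k ∈ Finset.Ico r m, |e' k| = ∑ k ∈ Finset.Ico (r+1) (m+1), |e k| := by
      rw [Finset.sum_Ico_eq_sum_range, Finset.sum_Ico_eq_sum_range]
      have hc : m - r = m + 1 - (r + 1) := by omega
      rw [← hc]
      apply Finset.sum_congr rfl
      intro k hk
      rw [he']
      simp only [if_neg (by omega : ¬ (r + k < r))]
      rw [show r + k + 1 = r + 1 + k from by omega]
    have htot : ∑ k ∈ range (m+1), |e k|
        = ∑ k ∈ Finset.Ico 0 r, |e k| + (∑ k ∈ Finset.Ico r (r+1), |e k|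
          + ∑ k ∈ Finset.Ico (r+1) (m+1), |e k|) := by
      rw [Finset.range_eq_Ico,
        ← Finset.sum_Ico_consecutive (fun k => |e k|) (by omega : 0 ≤ r) (by omega : r ≤ m+1),
        ← Finset.sum_Ico_consecutive (fun k => |e k|) (by omega : r ≤ r+1) (by omega : r+1 ≤ m+1)]
    rw [htot, hr1, hA, hB]
    rw [Finset.sum_Ico_eq_sum_range]
    simp
    ring
  rw [hsplit]
  have hcast : ((m - 1 : ℕ) : ℝ) = (m : ℝ) - 1 := by
    have : (1:ℕ) ≤ m := by omega
    push_cast [this]; ring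
  rw [hcast, show m - 1 + 1 = m from by omega] at IH
  have hm2' : (2:ℝ) ≤ (m:ℝ) := by exact_mod_cast hm2
  have hsq : ((m:ℝ)-1)^2 + (m:ℝ) ≤ (m:ℝ)^2 := by nlinarith
  have hprod := mul_le_mul_of_nonneg_left hsq hst.le
  linarith [IH, hrkey, hprod]

lemma intgNat (μ : Measure ℕ) [IsProbabilityMeasure μ] (f : ℕ → ℝ) (C : ℝ)
    (hC : ∀ x, |f x| ≤ C) : Integrable f μ := by
  apply Integrable.mono' (integrable_const C) Measurable.of_discrete.aestronglyMeasurable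
  exact Filter.Eventually.of_forall (fun x => by rw [Real.norm_eq_abs]; exact hC x)

lemma summableMeas (μ : Measure ℕ) [IsProbabilityMeasure μ] :
    Summable (fun k => (μ {k}).toReal) := by
  apply ENNReal.summable_toReal
  have hle : ∑' k : ℕ, μ {k} ≤ μ Set.univ :=
    tsum_measure_le_measure_univ (fun i => MeasurableSet.of_discrete.nullMeasurableSet)
      (fun i j hij => (Set.disjoint_singleton.mpr hij).aedisjoint)
  exact ne_top_of_le_ne_top (measure_ne_top μ _) hle

lemma measS (μ : Measure ℕ) [IsProbabilityMeasure μ] (S : Set ℕ) :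
    (μ S).toReal = ∑' k : S, (μ {(k : ℕ)}).toReal := by
  have h1 : (∑' k : S, μ {(k:ℕ)}) = μ S := by
    have := tsum_measure_preimage_singleton (μ := μ) (Set.to_countable S)
      (f := id) (fun y _ => by simp)
    simpa using this
  rw [← h1, ENNReal.tsum_toReal_eq (fun _ => measure_ne_top μ _)]

lemma dTV_bddAbove {μ ν : Measure ℕ} [IsProbabilityMeasure μ] [IsProbabilityMeasure ν] :
    BddAbove (Set.range fun s : {s : Set ℕ // MeasurableSet s} =>
      |(μ s.1).toReal - (ν s.1).toReal|) := by
  refine ⟨2, ?_⟩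
  rintro x ⟨s, rfl⟩
  have h1 : (μ s.1).toReal ≤ 1 := by
    rw [show (1:ℝ) = (μ Set.univ).toReal by simp]
    exact ENNReal.toReal_mono (measure_ne_top μ _) (measure_mono (Set.subset_univ _))
  have h2 : (ν s.1).toReal ≤ 1 := by
    rw [show (1:ℝ) = (ν Set.univ).toReal by simp]
    exact ENNReal.toReal_mono (measure_ne_top ν _) (measure_mono (Set.subset_univ _))
  have h3 : 0 ≤ (μ s.1).toReal := ENNReal.toReal_nonneg
  have h4 : 0 ≤ (ν s.1).toReal := ENNReal.toReal_nonneg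
  rw [abs_le]
  constructor <;> linarith

lemma le_dTV (μ ν : Measure ℕ) [IsProbabilityMeasure μ] [IsProbabilityMeasure ν] (S : Set ℕ) :
    |(μ S).toReal - (ν S).toReal| ≤ dTV μ ν :=
  le_ciSup dTV_bddAbove (⟨S, MeasurableSet.of_discrete⟩ : {s : Set ℕ // MeasurableSet s})

lemma dTV_nonneg (μ ν : Measure ℕ) [IsProbabilityMeasure μ] [IsProbabilityMeasure ν] :
    0 ≤ dTV μ ν :=
  le_trans (abs_nonneg _) (le_dTV μ ν ∅)

lemma dTV_int_bound (μ ν : Measure ℕ) [IsProbabilityMeasure μ] [IsProbabilityMeasure ν]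
    (f : ℕ → ℝ) (C : ℝ) (hC : ∀ x, |f x| ≤ C) :
    |∫ x, f x ∂ν - ∫ x, f x ∂μ| ≤ 2 * C * dTV μ ν := by
  have hC0 : 0 ≤ C := le_trans (abs_nonneg _) (hC 0)
  set d : ℕ → ℝ := fun k => (ν {k}).toReal - (μ {k}).toReal with hd
  have Sν := summableMeas ν
  have Sμ := summableMeas μ
  have Sd : Summable d := Sν.sub Sμ
  have Sabs : Summable (fun k => |d k|) := Sd.abs
  have Sfν : Summable (fun k => (ν {k}).toReal * f k) := by
    apply Summable.of_abs
    apply Summable.of_nonneg_of_le (fun k => abs_nonneg _) (fun k => ?_) (Sν.mul_right C)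
    rw [abs_mul, abs_of_nonneg ENNReal.toReal_nonneg]
    exact mul_le_mul_of_nonneg_left (hC k) ENNReal.toReal_nonneg
  have Sfμ : Summable (fun k => (μ {k}).toReal * f k) := by
    apply Summable.of_abs
    apply Summable.of_nonneg_of_le (fun k => abs_nonneg _) (fun k => ?_) (Sμ.mul_right C)
    rw [abs_mul, abs_of_nonneg ENNReal.toReal_nonneg]
    exact mul_le_mul_of_nonneg_left (hC k) ENNReal.toReal_nonneg
  have h1 : ∫ x, f x ∂ν - ∫ x, f x ∂μ = ∑' k, f k * d k := by
    rw [integral_countable' (intgNat ν f C hC), integral_countable' (intgNat μ f C hC)]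
    simp only [smul_eq_mul, measureReal_def]
    rw [← Summable.tsum_sub Sfν Sfμ]
    congr 1
    funext k
    rw [hd]
    ring
  have Sfd : Summable (fun k => f k * d k) := by
    apply Summable.of_abs
    apply Summable.of_nonneg_of_le (fun k => abs_nonneg _) (fun k => ?_) (Sabs.mul_left C)
    rw [abs_mul]
    exact mul_le_mul_of_nonneg_right (hC k) (abs_nonneg _)
  have SfdAbs : Summable (fun k => |f k| * |d k|) := by simpa [abs_mul] using Sfd.abs
  have h2 : |∑' k, f k * d k| ≤ ∑' k, C * |d k| := by
    have step1 : |∑' k, f k * d k| ≤ ∑' k, |f k| * |d k| := by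
      simpa [abs_mul] using norm_tsum_le_tsum_norm (f := fun k => f k * d k) (by simpa [abs_mul] using Sfd.abs)
    have step2 : ∑' k, |f k| * |d k| ≤ ∑' k, C * |d k| := by
      apply Summable.tsum_le_tsum _ SfdAbs (Sabs.mul_left C)
      intro k
      exact mul_le_mul_of_nonneg_right (hC k) (abs_nonneg _)
    linarith
  -- now sum of |d| ≤ 2 dTV
  set S : Set ℕ := {k | (μ {k}).toReal ≤ (ν {k}).toReal} with hS
  have hind : ∀ k, |d k| = S.indicator d k + Sᶜ.indicator (fun j => - d j) k := by
    intro k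
    by_cases hk : k ∈ S
    · rw [Set.indicator_of_mem hk, Set.indicator_of_notMem (by simp [hk])]
      have : 0 ≤ d k := by simp only [hd]; simp only [hS, Set.mem_setOf_eq] at hk; linarith
      rw [abs_of_nonneg this]; ring
    · rw [Set.indicator_of_notMem hk, Set.indicator_of_mem (by simp [hk])]
      have : d k ≤ 0 := by
        simp only [hS, Set.mem_setOf_eq, not_le] at hk
        simp only [hd]; linarith
      rw [abs_of_nonpos this]; ring
  have hsplit : ∑' k, |d k| = (∑' k : (S : Set ℕ), d (k:ℕ)) + (∑' k : ((Sᶜ) : Set ℕ), - d (k:ℕ)) := by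
    calc ∑' k, |d k| = ∑' k, (S.indicator d k + Sᶜ.indicator (fun j => - d j) k) := by
          exact tsum_congr hind
      _ = (∑' k, S.indicator d k) + (∑' k, Sᶜ.indicator (fun j => - d j) k) := by
          apply Summable.tsum_add (Sd.indicator S) ((Sd.neg).indicator Sᶜ)
      _ = (∑' k : (S : Set ℕ), d (k:ℕ)) + (∑' k : ((Sᶜ) : Set ℕ), - d (k:ℕ)) := by
          rw [← _root_.tsum_subtype S d, ← _root_.tsum_subtype (Sᶜ : Set ℕ) (fun j => - d j)]
  have hSd : (∑' k : (S : Set ℕ), d (k:ℕ)) ≤ dTV μ ν := by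
    have hν' : Summable (fun k : (S : Set ℕ) => (ν {(k:ℕ)}).toReal) := Sν.subtype S
    have hμ' : Summable (fun k : (S : Set ℕ) => (μ {(k:ℕ)}).toReal) := Sμ.subtype S
    have heq : (∑' k : (S : Set ℕ), d (k:ℕ)) = (ν S).toReal - (μ S).toReal := by
      have h5 : (∑' k : (S : Set ℕ), d (k:ℕ))
          = (∑' k : (S : Set ℕ), (ν {(k:ℕ)}).toReal) - (∑' k : (S : Set ℕ), (μ {(k:ℕ)}).toReal) :=
        Summable.tsum_sub hν' hμ'
      rw [h5, ← measS ν S, ← measS μ S]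
    rw [heq]
    calc (ν S).toReal - (μ S).toReal ≤ |(μ S).toReal - (ν S).toReal| := by
          rw [abs_sub_comm]; exact le_abs_self _
      _ ≤ dTV μ ν := le_dTV μ ν S
  have hScd : (∑' k : ((Sᶜ) : Set ℕ), - d (k:ℕ)) ≤ dTV μ ν := by
    have hν' : Summable (fun k : ((Sᶜ) : Set ℕ) => (ν {(k:ℕ)}).toReal) := Sν.subtype Sᶜ
    have hμ' : Summable (fun k : ((Sᶜ) : Set ℕ) => (μ {(k:ℕ)}).toReal) := Sμ.subtype Sᶜ
    have heq : (∑' k : ((Sᶜ) : Set ℕ), - d (k:ℕ)) = (μ Sᶜ).toReal - (ν Sᶜ).toReal := by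
      have h6 : (∑' k : ((Sᶜ) : Set ℕ), - d (k:ℕ))
          = ∑' k : ((Sᶜ) : Set ℕ), ((μ {(k:ℕ)}).toReal - (ν {(k:ℕ)}).toReal) := by
        apply tsum_congr; intro k; simp [hd]
      have h5 : (∑' k : ((Sᶜ) : Set ℕ), ((μ {(k:ℕ)}).toReal - (ν {(k:ℕ)}).toReal))
          = (∑' k : ((Sᶜ) : Set ℕ), (μ {(k:ℕ)}).toReal) - (∑' k : ((Sᶜ) : Set ℕ), (ν {(k:ℕ)}).toReal) :=
        Summable.tsum_sub hμ' hν'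
      rw [h6, h5, ← measS ν Sᶜ, ← measS μ Sᶜ]
    rw [heq]
    exact le_trans (le_abs_self _) (le_dTV μ ν Sᶜ)
  have h3 : ∑' k, C * |d k| = C * ∑' k, |d k| := by rw [tsum_mul_left]
  have h4 : C * ∑' k, |d k| ≤ C * (2 * dTV μ ν) := by
    apply mul_le_mul_of_nonneg_left _ hC0
    rw [hsplit]; linarith
  rw [h1]
  calc |∑' k, f k * d k| ≤ ∑' k, C * |d k| := h2
    _ = C * ∑' k, |d k| := h3
    _ ≤ C * (2 * dTV μ ν) := h4
    _ = 2 * C * dTV μ ν := by ring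

lemma abelSum (e bb : ℕ → ℝ) : ∀ m : ℕ, 1 ≤ m →
    ∑ i ∈ Icc 1 m, (e i - e (i-1)) * bb i
      = e m * bb m - e 0 * bb 1 + ∑ k ∈ Icc 1 (m-1), e k * (bb k - bb (k+1)) := by
  intro m
  induction m with
  | zero => omega
  | succ m ihm =>
    intro _
    by_cases hm : 1 ≤ m
    · have h1 : ∑ i ∈ Icc 1 (m+1), (e i - e (i-1)) * bb i
          = ∑ i ∈ Icc 1 m, (e i - e (i-1)) * bb i + (e (m+1) - e m) * bb (m+1) := by
        rw [← Finset.Ico_add_one_right_eq_Icc, Finset.sum_Ico_succ_top (by omega), Finset.Ico_add_one_right_eq_Icc]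
        simp
      have hIco : Ico 1 m = Icc 1 (m-1) := by
        ext x; simp only [Finset.mem_Ico, Finset.mem_Icc]; omega
      have h2 : ∑ k ∈ Icc 1 (m+1-1), e k * (bb k - bb (k+1))
          = ∑ k ∈ Icc 1 (m-1), e k * (bb k - bb (k+1)) + e m * (bb m - bb (m+1)) := by
        rw [show m+1-1 = m from rfl, ← Finset.Ico_add_one_right_eq_Icc, Finset.sum_Ico_succ_top (by omega),
          hIco]
      rw [h1, ihm hm, h2]
      ring
    · have hm0 : m = 0 := by omega
      subst hm0
      simp
      ring

lemma blockBound (m : ℕ) (hm : 1 ≤ m) (c bb : ℕ → ℝ) (θ θs G D δ : ℝ)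
    (hc0 : ∀ i, 1 ≤ i → i ≤ m → 0 ≤ c i) (hcs : ∀ i, 1 ≤ i → i ≤ m → c i ≤ θs)
    (hbb : ∀ i, |bb i| ≤ G) (hdiff : ∀ i, |bb (i+1) - bb i| ≤ 2*G*D)
    (hδ : |(1/(m:ℝ)) * ∑ i ∈ Icc 1 m, c i - θ| ≤ δ) (hD : 0 ≤ D) (hG : 0 ≤ G) :
    |∑ i ∈ Icc 1 m, (c i - θ) * bb i| ≤ G*((m:ℝ)*δ) + G*D*θs*(m:ℝ)^2/4 := by
  have hm0 : (0:ℝ) < (m:ℝ) := by exact_mod_cast hm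
  set θb : ℝ := (1/(m:ℝ)) * ∑ i ∈ Icc 1 m, c i with hθb
  have hθb0 : 0 ≤ θb := by
    rw [hθb]
    apply mul_nonneg (by positivity)
    apply Finset.sum_nonneg
    intro i hi
    simp only [Finset.mem_Icc] at hi
    exact hc0 i hi.1 hi.2
  have hθbs : θb ≤ θs := by
    rw [hθb]
    have hsum : ∑ i ∈ Icc 1 m, c i ≤ (m:ℝ) * θs := by
      calc ∑ i ∈ Icc 1 m, c i ≤ ∑ i ∈ Icc 1 m, θs := by
            apply Finset.sum_le_sum
            intro i hi
            simp only [Finset.mem_Icc] at hi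
            exact hcs i hi.1 hi.2
        _ = (m:ℝ) * θs := by
            rw [Finset.sum_const, Nat.card_Icc]
            simp
    rw [one_div, inv_mul_le_iff₀ hm0]
    linarith [hsum]
  -- the path
  set e : ℕ → ℝ := fun k => ∑ i ∈ Icc 1 k, (c i - θb) with he
  have he0 : e 0 = 0 := by rw [he]; simp
  have hestep : ∀ k, e (k+1) = e k + (c (k+1) - θb) := by
    intro k
    rw [he]
    simp only
    rw [← Finset.Ico_add_one_right_eq_Icc, Finset.sum_Ico_succ_top (by omega), Finset.Ico_add_one_right_eq_Icc]
  have hem : e m = 0 := by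
    rw [he]
    simp only
    rw [Finset.sum_sub_distrib]
    rw [Finset.sum_const, Nat.card_Icc]
    simp only [Nat.add_sub_cancel, smul_eq_mul]
    rw [hθb]
    field_simp
    rw [nsmul_eq_mul, mul_div_cancel₀ _ hm0.ne', sub_self]
  have hup : ∀ k < m, e (k+1) - e k ≤ θs - θb := by
    intro k hk
    rw [hestep k]
    have := hcs (k+1) (by omega) (by omega)
    linarith
  have hdn : ∀ k < m, e k - e (k+1) ≤ θb := by
    intro k hk
    rw [hestep k]
    have := hc0 (k+1) (by omega) (by omega)
    linarith
  have hpath := pathSum (θs - θb) θb (by linarith) hθb0 m e he0 hem hup hdn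
  rw [show θs - θb + θb = θs from by ring] at hpath
  -- decompose
  have hdec : ∑ i ∈ Icc 1 m, (c i - θ) * bb i
      = ∑ i ∈ Icc 1 m, (c i - θb) * bb i + (θb - θ) * ∑ i ∈ Icc 1 m, bb i := by
    rw [Finset.mul_sum, ← Finset.sum_add_distrib]
    apply Finset.sum_congr rfl
    intro i _
    ring
  have habel : ∑ i ∈ Icc 1 m, (c i - θb) * bb i
      = ∑ k ∈ Icc 1 (m-1), e k * (bb k - bb (k+1)) := by
    have h1 : ∑ i ∈ Icc 1 m, (c i - θb) * bb i
        = ∑ i ∈ Icc 1 m, (e i - e (i-1)) * bb i := by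
      apply Finset.sum_congr rfl
      intro i hi
      simp only [Finset.mem_Icc] at hi
      have : e i = e (i-1) + (c i - θb) := by
        have := hestep (i-1)
        rwa [show i - 1 + 1 = i from by omega] at this
      rw [this]
      ring
    rw [h1, abelSum e bb m hm, hem, he0]
    ring
  have hterm1 : |∑ i ∈ Icc 1 m, (c i - θb) * bb i| ≤ G*D*θs*(m:ℝ)^2/4 := by
    rw [habel]
    calc |∑ k ∈ Icc 1 (m-1), e k * (bb k - bb (k+1))|
        ≤ ∑ k ∈ Icc 1 (m-1), |e k * (bb k - bb (k+1))| := Finset.abs_sum_le_sum_abs _ _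
      _ ≤ ∑ k ∈ Icc 1 (m-1), |e k| * (2*G*D) := by
          apply Finset.sum_le_sum
          intro k _
          rw [abs_mul]
          apply mul_le_mul_of_nonneg_left _ (abs_nonneg _)
          rw [abs_sub_comm]
          exact hdiff k
      _ = (2*G*D) * ∑ k ∈ Icc 1 (m-1), |e k| := by rw [← Finset.sum_mul]; ring
      _ ≤ (2*G*D) * ∑ k ∈ range (m+1), |e k| := by
          apply mul_le_mul_of_nonneg_left _ (by positivity)
          apply Finset.sum_le_sum_of_subset_of_nonneg
          · intro x hx
            simp only [Finset.mem_Icc] at hx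
            simp only [Finset.mem_range]
            omega
          · intro i _ _
            exact abs_nonneg _
      _ ≤ (2*G*D) * (θs * (m:ℝ)^2/8) := by
          apply mul_le_mul_of_nonneg_left _ (by positivity)
          linarith [hpath]
      _ = G*D*θs*(m:ℝ)^2/4 := by ring
  have hterm2 : |(θb - θ) * ∑ i ∈ Icc 1 m, bb i| ≤ δ * ((m:ℝ) * G) := by
    rw [abs_mul]
    apply mul_le_mul hδ _ (abs_nonneg _) (le_trans (abs_nonneg _) hδ)
    calc |∑ i ∈ Icc 1 m, bb i| ≤ ∑ i ∈ Icc 1 m, |bb i| := Finset.abs_sum_le_sum_abs _ _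
      _ ≤ ∑ i ∈ Icc 1 m, G := Finset.sum_le_sum (fun i _ => hbb i)
      _ = (m:ℝ) * G := by rw [Finset.sum_const, Nat.card_Icc]; simp
  calc |∑ i ∈ Icc 1 m, (c i - θ) * bb i|
      ≤ |∑ i ∈ Icc 1 m, (c i - θb) * bb i| + |(θb - θ) * ∑ i ∈ Icc 1 m, bb i| := by
        rw [hdec]; exact abs_add_le _ _
    _ ≤ G*D*θs*(m:ℝ)^2/4 + δ * ((m:ℝ) * G) := add_le_add hterm1 hterm2
    _ = G*((m:ℝ)*δ) + G*D*θs*(m:ℝ)^2/4 := by ring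

lemma oneBlock (m : ℕ) (F : ℕ → ℝ) (c : ℕ) :
    ∑ i ∈ Ioc c (c+m), F i = ∑ i ∈ Icc 1 m, F (c+i) := by
  rw [← Finset.Ico_add_one_add_one_eq_Ioc, Finset.sum_Ico_eq_sum_range]
  rw [← Finset.Ico_add_one_right_eq_Icc, Finset.sum_Ico_eq_sum_range]
  rw [show c + m + 1 - (c+1) = m from by omega, show m + 1 - 1 = m from rfl]
  apply Finset.sum_congr rfl
  intro i _
  congr 1
  omega

lemma blocksSum (m : ℕ) (F : ℕ → ℝ) (u : ℕ) : ∀ v : ℕ, u ≤ v →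
    ∑ i ∈ Ioc (u*m) (v*m), F i = ∑ j ∈ Ico u v, ∑ i ∈ Icc 1 m, F (j*m+i) := by
  intro v hv
  induction v, hv using Nat.le_induction with
  | base => simp
  | succ v huv ihv =>
    have h1 : u*m ≤ v*m := Nat.mul_le_mul_right m huv
    have h2 : v*m ≤ (v+1)*m := Nat.mul_le_mul_right m (by omega)
    rw [← Finset.sum_Ioc_consecutive _ h1 h2, ihv, Finset.sum_Ico_succ_top huv]
    congr 1
    rw [show (v+1)*m = v*m + m from by ring]
    exact oneBlock m F (v*m)

/-- Lemma 5.2 (i): for bounded `g`,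
`|∑_{i=l+1}^n (θᵢ−θ) E g(T+i)| ≤ ‖g‖ (2θ*'m + nδ(m,θ) + (1/4)θ_* m n d_TV(L(T),L(T+1)))`. -/
theorem stmt5 {Ω : Type*} [MeasurableSpace Ω] (P : Measure Ω) [IsProbabilityMeasure P]
    (T : Ω → ℕ) (hT : Measurable T)
    (θ : ℝ) (hθ : 0 < θ) (θi : ℕ → ℝ) (hnn : ∀ i, 0 ≤ θi i)
    (hbdd : BddAbove (Set.range fun i => θi (i + 1)))
    (g : ℕ → ℝ) (hg : BddAbove (Set.range fun x => |g x|))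
    (l n m : ℕ) (hln : l < n) (hm : 1 ≤ m) :
    |∑ i ∈ Icc (l + 1) n, (θi i - θ) * ∫ ω, g (T ω + i) ∂P| ≤
      (⨆ x, |g x|) *
        (2 * max θ (⨆ i, θi (i + 1)) * m +
          n * (⨆ j : ℕ, |(1 / (m : ℝ)) * ∑ i ∈ Icc 1 m, θi (j * m + i) - θ|) +
          (1 / 4) * (⨆ i, θi (i + 1)) * m * n *
            dTV (Measure.map T P) (Measure.map (fun ω => T ω + 1) P)) := by
  have hm0 : (0:ℝ) < (m:ℝ) := by exact_mod_cast hm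
  set G : ℝ := ⨆ x, |g x| with hGdef
  set θs : ℝ := ⨆ i, θi (i + 1) with hθsdef
  set D : ℝ := dTV (Measure.map T P) (Measure.map (fun ω => T ω + 1) P) with hDdef
  set δ : ℝ := ⨆ j : ℕ, |(1 / (m : ℝ)) * ∑ i ∈ Icc 1 m, θi (j * m + i) - θ| with hδdef
  set Θ : ℝ := max θ θs with hΘdef
  have hGb : ∀ x, |g x| ≤ G := fun x => le_ciSup hg x
  have hG0 : 0 ≤ G := le_trans (abs_nonneg _) (hGb 0)
  have hθsb : ∀ i, 1 ≤ i → θi i ≤ θs := by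
    intro i hi
    have := le_ciSup hbdd (i-1)
    rwa [show i - 1 + 1 = i from by omega] at this
  have hθs0 : 0 ≤ θs := le_trans (hnn 1) (hθsb 1 le_rfl)
  have hΘ0 : 0 < Θ := lt_of_lt_of_le hθ (le_max_left _ _)
  have hterm : ∀ i, 1 ≤ i → |θi i - θ| ≤ Θ := by
    intro i hi
    rw [abs_le]
    constructor
    · have := hnn i
      have := le_max_left θ θs
      linarith
    · have := hθsb i hi
      have := le_max_right θ θs
      linarith
  -- instances
  have hT1 : Measurable (fun ω => T ω + 1) := Measurable.of_discrete.comp hT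
  haveI I1 : IsProbabilityMeasure (Measure.map T P) := Measure.isProbabilityMeasure_map hT.aemeasurable
  haveI I2 : IsProbabilityMeasure (Measure.map (fun ω => T ω + 1) P) :=
    Measure.isProbabilityMeasure_map hT1.aemeasurable
  have hD0 : 0 ≤ D := dTV_nonneg _ _
  -- δ bounds
  have havg : ∀ j : ℕ, 0 ≤ (1 / (m : ℝ)) * ∑ i ∈ Icc 1 m, θi (j * m + i) ∧
      (1 / (m : ℝ)) * ∑ i ∈ Icc 1 m, θi (j * m + i) ≤ θs := by
    intro j
    constructor
    · apply mul_nonneg (by positivity)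
      exact Finset.sum_nonneg (fun i _ => hnn _)
    · have hsum : ∑ i ∈ Icc 1 m, θi (j * m + i) ≤ (m:ℝ) * θs := by
        calc ∑ i ∈ Icc 1 m, θi (j * m + i) ≤ ∑ i ∈ Icc 1 m, θs := by
              apply Finset.sum_le_sum
              intro i hi
              simp only [Finset.mem_Icc] at hi
              exact hθsb _ (by omega)
          _ = (m:ℝ) * θs := by rw [Finset.sum_const, Nat.card_Icc]; simp
      rw [one_div, inv_mul_le_iff₀ hm0]
      linarith
  have hδbdd : BddAbove (Set.range fun j : ℕ =>
      |(1 / (m : ℝ)) * ∑ i ∈ Icc 1 m, θi (j * m + i) - θ|) := by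
    refine ⟨θs + θ, ?_⟩
    rintro x ⟨j, rfl⟩
    obtain ⟨h1, h2⟩ := havg j
    rw [abs_le]
    constructor <;> linarith
  have hδb : ∀ j : ℕ, |(1 / (m : ℝ)) * ∑ i ∈ Icc 1 m, θi (j * m + i) - θ| ≤ δ :=
    fun j => le_ciSup hδbdd j
  have hδ0 : 0 ≤ δ := le_trans (abs_nonneg _) (hδb 0)
  -- the integrals
  set b : ℕ → ℝ := fun i => ∫ ω, g (T ω + i) ∂P with hbdef
  have hbb : ∀ i, |b i| ≤ G := by
    intro i
    have h1 : ∀ᵐ ω ∂P, ‖g (T ω + i)‖ ≤ G :=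
      Filter.Eventually.of_forall (fun ω => by rw [Real.norm_eq_abs]; exact hGb _)
    have h2 := norm_integral_le_of_norm_le_const h1 (f := fun ω => g (T ω + i))
    simpa [hbdef] using h2
  have hdiff : ∀ i, |b (i+1) - b i| ≤ 2*G*D := by
    intro i
    have e1 : b i = ∫ x, g (x + i) ∂(Measure.map T P) := by
      rw [integral_map hT.aemeasurable Measurable.of_discrete.aestronglyMeasurable]
    have e2 : b (i+1) = ∫ x, g (x + i) ∂(Measure.map (fun ω => T ω + 1) P) := by
      rw [integral_map hT1.aemeasurable Measurable.of_discrete.aestronglyMeasurable]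
      simp only [hbdef]
      congr 1
      funext ω
      congr 1
      omega
    rw [e1, e2, hDdef]
    exact dTV_int_bound _ _ (fun x => g (x + i)) G (fun x => hGb _)
  -- edge bound
  have hedge : ∀ u v : ℕ, v ≤ u + m → |∑ i ∈ Ioc u v, (θi i - θ) * b i| ≤ (m:ℝ) * (Θ * G) := by
    intro u v huv
    calc |∑ i ∈ Ioc u v, (θi i - θ) * b i|
        ≤ ∑ i ∈ Ioc u v, |(θi i - θ) * b i| := Finset.abs_sum_le_sum_abs _ _
      _ ≤ ∑ i ∈ Ioc u v, Θ * G := by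
          apply Finset.sum_le_sum
          intro i hi
          simp only [Finset.mem_Ioc] at hi
          rw [abs_mul]
          exact mul_le_mul (hterm i (by omega)) (hbb i) (abs_nonneg _) hΘ0.le
      _ = ((v - u : ℕ) : ℝ) * (Θ * G) := by rw [Finset.sum_const, Nat.card_Ioc]; simp
      _ ≤ (m:ℝ) * (Θ * G) := by
          apply mul_le_mul_of_nonneg_right _ (by positivity)
          have : v - u ≤ m := by omega
          exact_mod_cast this
  -- arithmetic setup
  obtain ⟨q, r, hqr, hrm⟩ : ∃ q r, l = m * q + r ∧ r < m :=
    ⟨l / m, l % m, (Nat.div_add_mod l m).symm, Nat.mod_lt l (by omega)⟩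
  obtain ⟨Q, R, hQR, hRm⟩ : ∃ Q R, n = m * Q + R ∧ R < m :=
    ⟨n / m, n % m, (Nat.div_add_mod n m).symm, Nat.mod_lt n (by omega)⟩
  have hgoalrhs : G * (2 * Θ * m + n * δ + 1 / 4 * θs * m * n * D)
      = 2 * ((m:ℝ) * (Θ * G)) + (n * (G * δ) + (n:ℝ) * (G * D * θs * m / 4)) := by ring
  rw [Finset.Icc_add_one_left_eq_Ioc]
  show |∑ i ∈ Ioc l n, (θi i - θ) * b i| ≤
    G * (2 * Θ * (m:ℝ) + (n:ℝ) * δ + 1 / 4 * θs * (m:ℝ) * (n:ℝ) * D)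
  by_cases hcase : q + 1 ≤ Q
  · -- main case
    have hA1 : l ≤ (q+1)*m := by nlinarith [hqr, hrm]
    have hA2 : (q+1)*m ≤ (Q)*m := Nat.mul_le_mul_right m hcase
    have hB1 : Q*m ≤ n := by nlinarith [hQR]
    have hsplit : ∑ i ∈ Ioc l n, (θi i - θ) * b i
        = (∑ i ∈ Ioc l ((q+1)*m), (θi i - θ) * b i
          + ∑ i ∈ Ioc ((q+1)*m) (Q*m), (θi i - θ) * b i)
          + ∑ i ∈ Ioc (Q*m) n, (θi i - θ) * b i := by
      rw [Finset.sum_Ioc_consecutive _ hA1 hA2, Finset.sum_Ioc_consecutive _ (le_trans hA1 hA2) hB1]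
    have hmid : |∑ i ∈ Ioc ((q+1)*m) (Q*m), (θi i - θ) * b i|
        ≤ ((Q - (q+1) : ℕ) : ℝ) * (G*((m:ℝ)*δ) + G*D*θs*(m:ℝ)^2/4) := by
      rw [blocksSum m (fun i => (θi i - θ) * b i) (q+1) Q hcase]
      calc |∑ j ∈ Ico (q+1) Q, ∑ i ∈ Icc 1 m, (θi (j*m+i) - θ) * b (j*m+i)|
          ≤ ∑ j ∈ Ico (q+1) Q, |∑ i ∈ Icc 1 m, (θi (j*m+i) - θ) * b (j*m+i)| :=
            Finset.abs_sum_le_sum_abs _ _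
        _ ≤ ∑ j ∈ Ico (q+1) Q, (G*((m:ℝ)*δ) + G*D*θs*(m:ℝ)^2/4) := by
            apply Finset.sum_le_sum
            intro j _
            exact blockBound m hm (fun i => θi (j*m+i)) (fun i => b (j*m+i)) θ θs G D δ
              (fun i hi1 hi2 => hnn _) (fun i hi1 hi2 => hθsb _ (by omega))
              (fun i => hbb _) (fun i => by
                have := hdiff (j*m+i)
                simpa [Nat.add_assoc] using this)
              (hδb j) hD0 hG0
        _ = ((Q - (q+1) : ℕ) : ℝ) * (G*((m:ℝ)*δ) + G*D*θs*(m:ℝ)^2/4) := by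
            rw [Finset.sum_const, Nat.card_Ico]; simp; ring
    have hcnt : ((Q - (q+1) : ℕ) : ℝ) * m ≤ n := by
      have h1 : (Q - (q+1)) * m ≤ Q * m := Nat.mul_le_mul_right m (by omega)
      have h2 : (Q - (q+1)) * m ≤ n := le_trans h1 hB1
      exact_mod_cast h2
    have hmid2 : ((Q - (q+1) : ℕ) : ℝ) * (G*((m:ℝ)*δ) + G*D*θs*(m:ℝ)^2/4)
        ≤ (n:ℝ) * (G * δ) + (n:ℝ) * (G * D * θs * m / 4) := by
      have hc0 : (0:ℝ) ≤ ((Q - (q+1) : ℕ) : ℝ) := Nat.cast_nonneg _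
      have e1 : ((Q - (q+1) : ℕ) : ℝ) * (G*((m:ℝ)*δ))
          = (((Q - (q+1) : ℕ) : ℝ) * m) * (G * δ) := by ring
      have e2 : ((Q - (q+1) : ℕ) : ℝ) * (G*D*θs*(m:ℝ)^2/4)
          = (((Q - (q+1) : ℕ) : ℝ) * m) * (G * D * θs * m / 4) := by ring
      have b1 : (((Q - (q+1) : ℕ) : ℝ) * m) * (G * δ) ≤ (n:ℝ) * (G * δ) :=
        mul_le_mul_of_nonneg_right hcnt (by positivity)
      have b2 : (((Q - (q+1) : ℕ) : ℝ) * m) * (G * D * θs * m / 4)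
          ≤ (n:ℝ) * (G * D * θs * m / 4) :=
        mul_le_mul_of_nonneg_right hcnt (by positivity)
      rw [mul_add, e1, e2]
      linarith
    have hedge1 : |∑ i ∈ Ioc l ((q+1)*m), (θi i - θ) * b i| ≤ (m:ℝ) * (Θ * G) := by
      apply hedge
      have e : (q+1)*m = m*q + m := by ring
      linarith [hqr, hrm]
    have hedge2 : |∑ i ∈ Ioc (Q*m) n, (θi i - θ) * b i| ≤ (m:ℝ) * (Θ * G) := by
      apply hedge
      have e : Q*m = m*Q := by ring
      linarith [hQR, hRm]
    set X1 := ∑ i ∈ Ioc l ((q+1)*m), (θi i - θ) * b i with hX1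
    set X2 := ∑ i ∈ Ioc ((q+1)*m) (Q*m), (θi i - θ) * b i with hX2
    set X3 := ∑ i ∈ Ioc (Q*m) n, (θi i - θ) * b i with hX3
    rw [hgoalrhs, hsplit]
    have t0 : |X1 + X2| ≤ |X1| + |X2| := abs_add_le _ _
    have t1 : |X1 + X2 + X3| ≤ |X1| + |X2| + |X3| :=
      le_trans (abs_add_le _ _) (by linarith)
    linarith [t1, hedge1, hedge2, le_trans hmid hmid2]
  · -- degenerate case : n ≤ l + m
    have hnl : n ≤ l + m := by
      have hQq : Q ≤ q := by omega
      have h1 : m*Q ≤ m*q := mul_le_mul_right hQq m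
      linarith [hqr, hQR, hRm]
    have := hedge l n hnl
    rw [hgoalrhs]
    have hpos1 : 0 ≤ (n:ℝ) * (G * δ) := by positivity
    have hpos2 : 0 ≤ (n:ℝ) * (G * D * θs * m / 4) := by positivity
    have hpos3 : 0 ≤ (m:ℝ) * (Θ * G) := by positivity
    linarith
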